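/- Stein's lemma in one dimension: if n ~ N(0, σ²) and g : ℝ → ℝ is differentiable with E[|g'(n)|] < ∞ and g(n)·exp(−n²/(2σ²)) → 0 as |n| → ∞, then E[n·g(n)] = σ²·E[g'(n)]. -/

import Mathlib

open MeasureTheory ProbabilityTheory Filter
open scoped NNReal ENNReal

lemma stein_aux_integral (v : ℝ≥0) (hv : v ≠ 0) (h : ℝ → ℝ) :
    ∫ x, h x ∂(gaussianReal 0 v) = ∫ x, gaussianPDFReal 0 v x * h x := by
  rw [gaussianReal_of_var_ne_zero _ hv]
  rw [show gaussianPDF 0 v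
      = fun x => ((Real.toNNReal (gaussianPDFReal 0 v x) : ℝ≥0) : ℝ≥0∞) from rfl]
  rw [integral_withDensity_eq_integral_smul
      ((measurable_gaussianPDFReal 0 v).real_toNNReal) h]
  refine integral_congr_ae (Filter.Eventually.of_forall fun x => ?_)
  simp [NNReal.smul_def, Real.coe_toNNReal _ (gaussianPDFReal_nonneg 0 v x)]

lemma stein_aux_integrable (v : ℝ≥0) (hv : v ≠ 0) {h : ℝ → ℝ}
    (hh : Integrable h (gaussianReal 0 v)) :
    Integrable (fun x => gaussianPDFReal 0 v x * h x) volume := by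
  rw [gaussianReal_of_var_ne_zero _ hv] at hh
  rw [show gaussianPDF 0 v
      = fun x => ((Real.toNNReal (gaussianPDFReal 0 v x) : ℝ≥0) : ℝ≥0∞) from rfl] at hh
  rw [integrable_withDensity_iff_integrable_smul
      ((measurable_gaussianPDFReal 0 v).real_toNNReal)] at hh
  refine hh.congr (Filter.Eventually.of_forall fun x => ?_)
  simp [NNReal.smul_def, Real.coe_toNNReal _ (gaussianPDFReal_nonneg 0 v x)]

/-- Stein's lemma in one dimension: if `n ~ N(0, σ²)` and `g : ℝ → ℝ` is
differentiable with integrable derivative and `g(x)·exp(−x²/(2σ²)) → 0` as `|x| → ∞`, then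
`E[n·g(n)] = σ²·E[g'(n)]`. -/
theorem stein_lemma_one_dim (σ : ℝ≥0) (hσ : 0 < σ) (g : ℝ → ℝ)
    (hg : Differentiable ℝ g)
    (hint : Integrable (fun x => deriv g x) (gaussianReal 0 (σ ^ 2)))
    (hint' : Integrable (fun x => x * g x) (gaussianReal 0 (σ ^ 2)))
    (hdecay : Tendsto (fun x => g x * Real.exp (-x ^ 2 / (2 * (σ : ℝ) ^ 2)))
      (Filter.cocompact ℝ) (nhds 0)) :
    ∫ x, x * g x ∂(gaussianReal 0 (σ ^ 2)) =
      (σ : ℝ) ^ 2 * ∫ x, deriv g x ∂(gaussianReal 0 (σ ^ 2)) := by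
  have hσ' : (0 : ℝ) < (σ : ℝ) := hσ
  have hv : (σ ^ 2 : ℝ≥0) ≠ 0 := pow_ne_zero _ hσ.ne'
  set s : ℝ := (σ : ℝ) ^ 2 with hs
  have hs0 : (0 : ℝ) < s := by positivity
  -- the exponential part and its derivative
  set E : ℝ → ℝ := fun x => Real.exp (-x ^ 2 / (2 * s)) with hE
  have hEpos : ∀ x, 0 < E x := fun x => Real.exp_pos _
  set C : ℝ := (Real.sqrt (2 * Real.pi * s))⁻¹ with hC
  have hC0 : (0 : ℝ) < C := by
    rw [hC]
    positivity
  have hpdf : ∀ x, gaussianPDFReal 0 (σ ^ 2) x = C * E x := by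
    intro x
    simp [gaussianPDFReal, hC, hE, hs]
  -- the function F and its derivative
  set F : ℝ → ℝ := fun x => g x * E x with hF
  set F' : ℝ → ℝ := fun x => E x * deriv g x - s⁻¹ * (E x * (x * g x)) with hF'
  have hderiv : ∀ x, HasDerivAt F (F' x) x := by
    intro x
    have h1 : HasDerivAt (fun x : ℝ => -x ^ 2 / (2 * s)) (-(2 * x) / (2 * s)) x := by
      have := ((hasDerivAt_pow 2 x).neg).div_const (2 * s)
      simpa using this
    have h2 : HasDerivAt E (E x * (-(2 * x) / (2 * s))) x :=
      (Real.hasDerivAt_exp _).comp x h1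
    have h3 : HasDerivAt F (deriv g x * E x + g x * (E x * (-(2 * x) / (2 * s)))) x :=
      ((hg x).hasDerivAt).mul h2
    convert h3 using 1
    rw [hF']
    field_simp
    ring
  -- integrability of the pieces w.r.t. volume
  have hI1 : Integrable (fun x => gaussianPDFReal 0 (σ ^ 2) x * deriv g x) volume :=
    stein_aux_integrable _ hv hint
  have hI2 : Integrable (fun x => gaussianPDFReal 0 (σ ^ 2) x * (x * g x)) volume :=
    stein_aux_integrable _ hv hint'
  have hE1 : Integrable (fun x => E x * deriv g x) volume := by
    have := hI1.const_mul C⁻¹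
    refine this.congr (Filter.Eventually.of_forall fun x => ?_)
    simp only [hpdf]
    field_simp
  have hE2 : Integrable (fun x => E x * (x * g x)) volume := by
    have := hI2.const_mul C⁻¹
    refine this.congr (Filter.Eventually.of_forall fun x => ?_)
    simp only [hpdf]
    field_simp
  have hF'int : Integrable F' volume := hE1.sub (hE2.const_mul s⁻¹)
  -- limits of F at ±∞
  have hco : Filter.cocompact ℝ = Filter.atBot ⊔ Filter.atTop := cocompact_eq_atBot_atTop
  have hdecay' : Tendsto F (Filter.cocompact ℝ) (nhds 0) := by
    refine hdecay.congr fun x => ?_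
    rw [hF, hE, hs]
  have htop : Tendsto F Filter.atTop (nhds 0) := by
    refine hdecay'.mono_left ?_
    rw [hco]; exact le_sup_right
  have hbot : Tendsto F Filter.atBot (nhds 0) := by
    refine hdecay'.mono_left ?_
    rw [hco]; exact le_sup_left
  -- the integral of F' over ℝ is 0
  have hIoi : ∫ x in Set.Ioi (0:ℝ), F' x = 0 - F 0 :=
    integral_Ioi_of_hasDerivAt_of_tendsto' (fun x _ => hderiv x) hF'int.integrableOn htop
  have hIic : ∫ x in Set.Iic (0:ℝ), F' x = F 0 - 0 :=
    integral_Iic_of_hasDerivAt_of_tendsto' (fun x _ => hderiv x) hF'int.integrableOn hbot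
  have htot : ∫ x, F' x = 0 := by
    rw [← intervalIntegral.integral_Iic_add_Ioi (b := (0:ℝ)) hF'int.integrableOn hF'int.integrableOn,
      hIoi, hIic]
    ring
  have hsplit : ∫ x, F' x = (∫ x, E x * deriv g x) - s⁻¹ * ∫ x, E x * (x * g x) := by
    rw [hF']
    rw [integral_sub hE1 (hE2.const_mul s⁻¹), integral_const_mul]
  have hkey : ∫ x, E x * (x * g x) = s * ∫ x, E x * deriv g x := by
    have h := htot
    rw [hsplit] at h
    have : s⁻¹ * ∫ x, E x * (x * g x) = ∫ x, E x * deriv g x := by linarith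
    field_simp at this ⊢
    linarith
  -- convert back to the gaussian measure
  rw [stein_aux_integral _ hv, stein_aux_integral _ hv]
  calc ∫ x, gaussianPDFReal 0 (σ ^ 2) x * (x * g x)
      = C * ∫ x, E x * (x * g x) := by
        rw [← integral_const_mul]
        exact integral_congr_ae (Filter.Eventually.of_forall fun x => by
          simp only [hpdf]; ring)
    _ = C * (s * ∫ x, E x * deriv g x) := by rw [hkey]
    _ = s * ∫ x, gaussianPDFReal 0 (σ ^ 2) x * deriv g x := by
        rw [show ∫ x, gaussianPDFReal 0 (σ ^ 2) x * deriv g x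
            = C * ∫ x, E x * deriv g x by
          rw [← integral_const_mul]
          exact integral_congr_ae (Filter.Eventually.of_forall fun x => by
            simp only [hpdf]; ring)]
        ring
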